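/- Let a, c, t, s ∈ ℝ_{>0}. The 2×2 real matrix g with entries g₁₁=(tc+sa)/(a+c), g₁₂=(t-s)/(a+c), g₂₁=ac(t-s)/(a+c), g₂₂=(ta+sc)/(a+c) has all four entries positive and positive determinant if and only if t/s > 1. -/
import Mathlib

open Matrix

theorem stmt1 (a c t s : ℝ) (ha : 0 < a) (hc : 0 < c) (ht : 0 < t) (hs : 0 < s) :
    ((0 < (t * c + s * a)/(a + c) ∧ 0 < (t - s)/(a + c) ∧
      0 < a * c * (t - s)/(a + c) ∧ 0 < (t * a + s * c)/(a + c)) ∧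
     0 < (!![(t * c + s * a)/(a + c), (t - s)/(a + c);
             a * c * (t - s)/(a + c), (t * a + s * c)/(a + c)]).det) ↔ t / s > 1 := by
  have hac : 0 < a + c := by linarith
  rw [Matrix.det_fin_two_of]
  constructor
  · rintro ⟨⟨-, h2, -, -⟩, -⟩
    have : 0 < t - s := by have := (div_pos_iff_of_pos_right hac).mp h2; linarith
    rw [gt_iff_lt, lt_div_iff₀ hs]; linarith
  · intro h
    have hts : 0 < t - s := by
      rw [gt_iff_lt, lt_div_iff₀ hs] at h; linarith
    have hdet : (t * c + s * a)/(a + c) * ((t * a + s * c)/(a + c)) -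
        (t - s)/(a + c) * (a * c * (t - s)/(a + c)) = t * s := by
      field_simp; ring
    refine ⟨⟨by positivity, by positivity, by positivity, by positivity⟩, ?_⟩
    rw [hdet]; positivity
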